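/- Let q = p^d with p prime and d ≥ 1, and let C be a code in the Hamming graph H(m,q) with minimum distance δ ≥ 5 containing the zero vertex 0. Suppose X ≤ Aut(C) is such that C is X-alphabet-affine and (X,2)-neighbour-transitive. Let N be a normal p-subgroup of K = X ∩ B containing every normal p-subgroup of K, and let W be the orbit of 0 under N. If W is not the binary repetition code (in particular, whenever q > 2 or W ≠ {0, all-ones vector}), then q² divides |W|. -/

import Mathlib

open Equiv

namespace Paper

/-- A Hamming-graph automorphism of `Fin m → Q` given by entrywise permutations `h`
and a permutation `σ` of the entries. -/
def IsQAutPair {m : ℕ} {Q : Type*} (g : Perm (Fin m → Q)) (h : Fin m → Perm Q)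
    (σ : Perm (Fin m)) : Prop :=
  ∀ α i, g α i = h i (α (σ.symm i))

/-- `g` is an automorphism of the Hamming graph `H(m,q)`. -/
def IsQAut {m : ℕ} {Q : Type*} (g : Perm (Fin m → Q)) : Prop :=
  ∃ h σ, IsQAutPair g h σ

/-- The permutation group `X_i^{Q_i}` induced on the alphabet in entry `i`
by the stabiliser in `X` of the entry `i`. -/
def indQ {m : ℕ} {Q : Type*} (X : Set (Perm (Fin m → Q))) (i : Fin m) : Set (Perm Q) :=
  {π | ∃ g ∈ X, ∃ h σ, IsQAutPair g h σ ∧ σ i = i ∧ h i = π}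

/-- `C_s`, the set of vertices at Hamming distance exactly `s` from the code `C`. -/
def distSet {m : ℕ} {Q : Type*} [DecidableEq Q] (C : Set (Fin m → Q)) (s : ℕ) :
    Set (Fin m → Q) :=
  {v | (∃ c ∈ C, hammingDist v c = s) ∧ ∀ c ∈ C, s ≤ hammingDist v c}

/-- `C` is `(X,s)`-neighbour-transitive: `X` acts transitively on each of
`C = C_0, C_1, …, C_s`. -/
def NbrTrans {m : ℕ} {Q : Type*} [DecidableEq Q] (X : Set (Perm (Fin m → Q)))
    (C : Set (Fin m → Q)) (s : ℕ) : Prop :=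
  ∀ j ≤ s, ∀ u ∈ distSet C j, ∀ v ∈ distSet C j, ∃ g ∈ X, g u = v

/-- `δ` is the minimum distance of the code `C`. -/
def IsMinDist {m : ℕ} {Q : Type*} [DecidableEq Q] (C : Set (Fin m → Q)) (δ : ℕ) : Prop :=
  (∃ u ∈ C, ∃ v ∈ C, u ≠ v ∧ hammingDist u v = δ) ∧
  ∀ u ∈ C, ∀ v ∈ C, u ≠ v → δ ≤ hammingDist u v

/-- The alphabet `Q = F_p^d`. -/
abbrev QA (p d : ℕ) : Type := Fin d → ZMod p

/-- The vertex set `V = (F_p^d)^M` of `H(m, p^d)`. -/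
abbrev VA (p d m : ℕ) : Type := Fin m → QA p d

/-- The subgroup of `Sym(A)` consisting of all translations `v ↦ v + a`. -/
def TransSub (A : Type*) [AddCommGroup A] : Subgroup (Perm A) where
  carrier := {g : Perm A | ∃ a : A, ∀ v, g v = v + a}
  one_mem' := ⟨0, fun v => by simp⟩
  mul_mem' := fun {f g} hf hg => by
    obtain ⟨a, ha⟩ := hf
    obtain ⟨b, hb⟩ := hg
    exact ⟨b + a, fun v => by rw [Perm.mul_apply, hb, ha, add_assoc]⟩
  inv_mem' := fun {f} hf => by
    obtain ⟨a, ha⟩ := hf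
    refine ⟨-a, fun v => ?_⟩
    have h1 : f (v + -a) = v := by rw [ha]; abel
    calc f⁻¹ v = f⁻¹ (f (v + -a)) := by rw [h1]
      _ = v + -a := by first | simp | exact f.symm_apply_apply _

/-- `K = X ∩ B`, the kernel of the action of `X` on the set of entries `M`:
the elements of `X` acting entrywise (with trivial permutation of `M`). -/
def KSet {p d m : ℕ} (X : Set (Perm (VA p d m))) : Set (Perm (VA p d m)) :=
  {g | g ∈ X ∧ ∃ h, IsQAutPair g h 1}

/-- The group `K^{Q_i}` induced on the alphabet in entry `i` by `K = X ∩ B`. -/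
def indK {p d m : ℕ} (X : Set (Perm (VA p d m))) (i : Fin m) : Set (Perm (QA p d)) :=
  {π | ∃ g ∈ X, ∃ h, IsQAutPair g h 1 ∧ h i = π}

/-- `C` is `X`-alphabet-affine: `X ≤ Aut(C)`, `K ≠ 1`, `X` is transitive on the entries,
and each `X_i^{Q_i}` is an affine 2-transitive group, i.e. it is 2-transitive on `Q_i`
and contains the translation group `T_i` as a normal subgroup. -/
def AlphabetAffine {p d m : ℕ} (X : Set (Perm (VA p d m))) (C : Set (VA p d m)) : Prop :=
  (∀ g ∈ X, IsQAut g) ∧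
  (∀ g ∈ X, g '' C = C) ∧
  (∃ g ∈ KSet X, g ≠ 1) ∧
  (∀ i j : Fin m, ∃ g ∈ X, ∃ h σ, IsQAutPair g h σ ∧ σ i = j) ∧
  (∀ i : Fin m,
    (∀ a b a' b' : QA p d, a ≠ b → a' ≠ b' → ∃ π ∈ indQ X i, π a = a' ∧ π b = b') ∧
    ((TransSub (QA p d) : Set (Perm (QA p d))) ⊆ indQ X i) ∧
    (∀ π ∈ indQ X i, ∀ t ∈ TransSub (QA p d), π * t * π⁻¹ ∈ TransSub (QA p d)))


section PairAlg

variable {m : ℕ} {Q : Type*}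

theorem IsQAutPair.mul {g₁ g₂ : Perm (Fin m → Q)} {h₁ h₂ : Fin m → Perm Q}
    {σ₁ σ₂ : Perm (Fin m)} (H1 : IsQAutPair g₁ h₁ σ₁) (H2 : IsQAutPair g₂ h₂ σ₂) :
    IsQAutPair (g₁ * g₂) (fun i => h₁ i * h₂ (σ₁.symm i)) (σ₁ * σ₂) := by
  intro α i
  have : (g₁ * g₂) α i = g₁ (g₂ α) i := rfl
  rw [this, H1, H2]
  rfl

theorem IsQAutPair.one : IsQAutPair (1 : Perm (Fin m → Q)) (fun _ => 1) 1 := by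
  intro α i; rfl

theorem IsQAutPair.inv {g : Perm (Fin m → Q)} {h : Fin m → Perm Q} {σ : Perm (Fin m)}
    (H : IsQAutPair g h σ) :
    IsQAutPair g⁻¹ (fun j => (h (σ j))⁻¹) σ⁻¹ := by
  have key : ∀ α, g⁻¹ α = fun j => (h (σ j))⁻¹ (α (σ j)) := by
    intro α
    apply g.injective
    rw [← Perm.mul_apply, mul_inv_cancel, Perm.one_apply]
    funext i
    rw [H]
    simp
  intro α j
  rw [key]
  have : (Equiv.symm σ⁻¹) j = σ j := rfl
  rw [this]

theorem IsQAutPair.mul1 {g₁ g₂ : Perm (Fin m → Q)} {h₁ h₂ : Fin m → Perm Q}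
    (H1 : IsQAutPair g₁ h₁ 1) (H2 : IsQAutPair g₂ h₂ 1) :
    IsQAutPair (g₁ * g₂) (fun i => h₁ i * h₂ i) 1 := by
  have := H1.mul H2
  simpa [Perm.one_symm] using this

theorem IsQAutPair.inv1 {g : Perm (Fin m → Q)} {h : Fin m → Perm Q}
    (H : IsQAutPair g h 1) :
    IsQAutPair g⁻¹ (fun j => (h j)⁻¹) 1 := by
  have := H.inv
  simpa using this

theorem IsQAutPair.pow1 {g : Perm (Fin m → Q)} {h : Fin m → Perm Q}
    (H : IsQAutPair g h 1) (n : ℕ) :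
    IsQAutPair (g ^ n) (fun i => (h i) ^ n) 1 := by
  induction n with
  | zero => simpa [pow_zero] using (IsQAutPair.one : IsQAutPair (1 : Perm (Fin m → Q)) _ 1)
  | succ n ih =>
    have := ih.mul1 H
    simpa [pow_succ] using this

/-- conjugation formula : component of `x * n * x⁻¹` at `i` is
`h i * k (σ.symm i) * (h i)⁻¹`. -/
theorem IsQAutPair.conj {x n : Perm (Fin m → Q)} {h k : Fin m → Perm Q} {σ : Perm (Fin m)}
    (Hx : IsQAutPair x h σ) (Hn : IsQAutPair n k 1) :
    IsQAutPair (x * n * x⁻¹) (fun i => h i * k (σ.symm i) * (h i)⁻¹) 1 := by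
  have h2 := (Hx.mul Hn).mul Hx.inv
  have e1 : σ * 1 * σ⁻¹ = 1 := by group
  have : IsQAutPair (x * n * x⁻¹)
      (fun i => (fun j => h j * k ((σ.symm) j)) i * (fun j => (h (σ j))⁻¹) ((σ * 1).symm i))
      (σ * 1 * σ⁻¹) := h2
  rw [e1] at this
  convert this using 2 with i
  simp [mul_assoc]

/-- a `Q`-automorphism preserves Hamming distance. -/
theorem IsQAutPair.hammingDist_map [DecidableEq Q] {g : Perm (Fin m → Q)}
    {h : Fin m → Perm Q} {σ : Perm (Fin m)} (H : IsQAutPair g h σ) (α β : Fin m → Q) :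
    hammingDist (g α) (g β) = hammingDist α β := by
  classical
  unfold hammingDist
  apply Finset.card_bij (fun i _ => σ.symm i)
  · intro i hi
    simp only [Finset.mem_filter, Finset.mem_univ, true_and] at hi ⊢
    intro hc
    apply hi
    rw [H, H, hc]
  · intro a ha b hb hab
    exact σ.symm.injective hab
  · intro b hb
    refine ⟨σ b, ?_, by simp⟩
    simp only [Finset.mem_filter, Finset.mem_univ, true_and] at hb ⊢
    intro hc
    apply hb
    have := congrArg (fun q => (h (σ b))⁻¹ q) hc
    simpa [H α (σ b), H β (σ b)] using this

end PairAlg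

section Trans

variable {A : Type*} [AddCommGroup A]

theorem addRight_mem_transSub (a : A) : Equiv.addRight a ∈ TransSub A :=
  ⟨a, fun v => rfl⟩

theorem transSub_eq_addRight {t : Perm A} (ht : t ∈ TransSub A) :
    t = Equiv.addRight (t 0) := by
  obtain ⟨a, ha⟩ := ht
  have h0 : t 0 = a := by rw [ha]; simp
  ext v
  rw [ha, h0]
  rfl

theorem transSub_pow_apply {t : Perm A} {a : A} (ha : ∀ v, t v = v + a) (n : ℕ) :
    ∀ v, (t ^ n) v = v + n • a := by
  induction n with
  | zero => intro v; simp
  | succ n ih =>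
    intro v
    rw [pow_succ, Perm.mul_apply, ih, ha, succ_nsmul, add_assoc]
    abel

theorem isPGroup_transSub (p : ℕ) (hp : p.Prime) (hA : ∀ a : A, p • a = 0) :
    IsPGroup p (TransSub A) := by
  intro g
  refine ⟨1, ?_⟩
  obtain ⟨a, ha⟩ := g.2
  ext v
  have : ((g ^ p ^ 1 : ↥(TransSub A)) : Perm A) = (g : Perm A) ^ p ^ 1 := by
    push_cast; ring_nf
  rw [Subgroup.coe_one, Perm.one_apply]
  calc ((g ^ p ^ 1 : ↥(TransSub A)) : Perm A) v
      = ((g : Perm A) ^ p ^ 1) v := by rw [this]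
    _ = v + p ^ 1 • a := transSub_pow_apply ha (p ^ 1) v
    _ = v := by rw [pow_one, hA]; simp

theorem mem_transSub_of_comm {u : Perm A}
    (hc : ∀ t ∈ TransSub A, u * t = t * u) : u ∈ TransSub A := by
  refine ⟨u 0, fun v => ?_⟩
  have := congrArg (fun s : Perm A => s 0) (hc (Equiv.addRight v) (addRight_mem_transSub v))
  simp only [Perm.mul_apply] at this
  have h1 : (Equiv.addRight v) (0 : A) = 0 + v := rfl
  have h2 : (Equiv.addRight v) (u 0) = u 0 + v := rfl
  rw [h1, h2, zero_add] at this
  rw [this, add_comm]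

end Trans

section KFacts

variable {p d m : ℕ} {X : Subgroup (Perm (VA p d m))} {C : Set (VA p d m)}

theorem kset_one_mem : (1 : Perm (VA p d m)) ∈ KSet (X : Set (Perm (VA p d m))) :=
  ⟨X.one_mem, fun _ => 1, IsQAutPair.one⟩

theorem kset_mul_mem {g g' : Perm (VA p d m)} (hg : g ∈ KSet (X : Set (Perm (VA p d m))))
    (hg' : g' ∈ KSet (X : Set (Perm (VA p d m)))) :
    g * g' ∈ KSet (X : Set (Perm (VA p d m))) := by
  obtain ⟨hgX, h, H⟩ := hg
  obtain ⟨hgX', h', H'⟩ := hg'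
  exact ⟨X.mul_mem hgX hgX', _, H.mul1 H'⟩

theorem kset_inv_mem {g : Perm (VA p d m)} (hg : g ∈ KSet (X : Set (Perm (VA p d m)))) :
    g⁻¹ ∈ KSet (X : Set (Perm (VA p d m))) := by
  obtain ⟨hgX, h, H⟩ := hg
  exact ⟨X.inv_mem hgX, _, H.inv1⟩

theorem conj_mem_kset (hX1 : ∀ g ∈ (X : Set (Perm (VA p d m))), IsQAut g)
    {x g : Perm (VA p d m)} (hx : x ∈ X) (hg : g ∈ KSet (X : Set (Perm (VA p d m)))) :
    x * g * x⁻¹ ∈ KSet (X : Set (Perm (VA p d m))) := by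
  obtain ⟨hgX, k, Hk⟩ := hg
  obtain ⟨h, σ, Hx⟩ := hX1 x hx
  exact ⟨X.mul_mem (X.mul_mem hx hgX) (X.inv_mem hx), _, Hx.conj Hk⟩

theorem mem_indQ_of_pair1 {g : Perm (VA p d m)} {k : Fin m → Perm (QA p d)}
    (hg : g ∈ X) (H : IsQAutPair g k 1) (i : Fin m) :
    k i ∈ indQ (X : Set (Perm (VA p d m))) i :=
  ⟨g, hg, k, 1, H, rfl, rfl⟩

theorem indQ_inv_mem {i : Fin m} {π : Perm (QA p d)}
    (hπ : π ∈ indQ (X : Set (Perm (VA p d m))) i) :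
    π⁻¹ ∈ indQ (X : Set (Perm (VA p d m))) i := by
  obtain ⟨g, hg, h, σ, H, hσ, hh⟩ := hπ
  refine ⟨g⁻¹, X.inv_mem hg, _, σ⁻¹, H.inv, ?_, ?_⟩
  · have : σ.symm i = i := by rw [Equiv.symm_apply_eq, hσ]
    exact this
  · simp only [hσ, hh]

/-- Step 4a-4c : every translation appears as the `i`-component of an element of `K`. -/
theorem exists_trans_comp (hAff : AlphabetAffine (X : Set (Perm (VA p d m))) C)
    (i : Fin m) (a : QA p d) :
    ∃ g ∈ KSet (X : Set (Perm (VA p d m))), ∃ h, IsQAutPair g h 1 ∧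
      h i = Equiv.addRight a := by
  obtain ⟨hX1, hX2, ⟨g0, hg0K, hg0ne⟩, hX4, hX5⟩ := hAff
  by_cases ha : a = 0
  · refine ⟨1, kset_one_mem, fun _ => 1, IsQAutPair.one, ?_⟩
    subst ha
    ext v
    simp
  -- 4a: some nontrivial component somewhere
  obtain ⟨k0, Hk0⟩ := hg0K.2
  have h4a : ∃ i₀ x₀, k0 i₀ x₀ ≠ x₀ := by
    by_contra hcon
    push_neg at hcon
    apply hg0ne
    apply Equiv.ext
    intro α
    funext j
    rw [Hk0 α j, hcon]
    rfl
  obtain ⟨i₀, x₀, hx₀⟩ := h4a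
  -- 4b: nontrivial component at i
  obtain ⟨x, hxX, hx, σx, Hx, hσx⟩ := hX4 i₀ i
  set g1 := x * g0 * x⁻¹ with hg1def
  have hg1K : g1 ∈ KSet (X : Set (Perm (VA p d m))) := conj_mem_kset hX1 hxX hg0K
  have Hg1 := Hx.conj Hk0
  set w : Fin m → Perm (QA p d) := fun j => hx j * k0 (σx.symm j) * (hx j)⁻¹ with hwdef
  have hsymm : σx.symm i = i₀ := by rw [Equiv.symm_apply_eq, hσx]
  have hwi : w i = hx i * k0 i₀ * (hx i)⁻¹ := by rw [hwdef]; simp [hsymm]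
  have hwine : w i ≠ 1 := by
    intro hcon
    have : (w i) (hx i x₀) = hx i x₀ := by rw [hcon]; rfl
    rw [hwi] at this
    simp only [Perm.mul_apply, Perm.inv_def, Equiv.symm_apply_apply] at this
    exact hx₀ ((hx i).injective this)
  have hwiQ : w i ∈ indQ (X : Set (Perm (VA p d m))) i :=
    mem_indQ_of_pair1 hg1K.1 Hg1 i
  -- 4c-1: produce a K-element whose i-component is a nontrivial translation
  have step1 : ∃ g2 ∈ KSet (X : Set (Perm (VA p d m))), ∃ h2, IsQAutPair g2 h2 1 ∧
      h2 i ∈ TransSub (QA p d) ∧ h2 i ≠ 1 := by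
    by_cases hcomm : ∀ t ∈ TransSub (QA p d), w i * t = t * w i
    · exact ⟨g1, hg1K, w, Hg1, mem_transSub_of_comm hcomm, hwine⟩
    · push_neg at hcomm
      obtain ⟨t, htT, htne⟩ := hcomm
      -- lift t at entry i
      obtain ⟨y, hyX, hy, σy, Hy, hσy, hyi⟩ := (hX5 i).2.1 htT
      set g2 := g1 * (y * g1⁻¹ * y⁻¹) with hg2def
      have hKy : y * g1⁻¹ * y⁻¹ ∈ KSet (X : Set (Perm (VA p d m))) :=
        conj_mem_kset hX1 hyX (kset_inv_mem hg1K)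
      have hg2K : g2 ∈ KSet (X : Set (Perm (VA p d m))) := kset_mul_mem hg1K hKy
      have Hconj := Hy.conj Hg1.inv1
      have Hg2 := Hg1.mul1 Hconj
      refine ⟨g2, hg2K, _, Hg2, ?_, ?_⟩
      · have hσyi : σy.symm i = i := by rw [Equiv.symm_apply_eq, hσy]
        simp only [hσyi, hyi]
        have h1 : w i * (t * (w i)⁻¹ * t⁻¹) = (w i * t * (w i)⁻¹) * t⁻¹ := by group
        rw [h1]
        exact (TransSub (QA p d)).mul_mem ((hX5 i).2.2 _ hwiQ t htT)
          ((TransSub (QA p d)).inv_mem htT)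
      · have hσyi : σy.symm i = i := by rw [Equiv.symm_apply_eq, hσy]
        simp only [hσyi, hyi]
        intro hcon
        apply htne
        have : w i * t * (w i)⁻¹ * t⁻¹ = 1 := by
          rw [← hcon]; group
        have h2 : w i * t * (w i)⁻¹ = t := by
          have := congrArg (fun z => z * t) this
          simpa [mul_assoc] using this
        calc w i * t = (w i * t * (w i)⁻¹) * w i := by group
          _ = t * w i := by rw [h2]
  -- 4c-2: drag the nontrivial translation to `addRight a`
  obtain ⟨g2, hg2K, h2, Hg2, h2T, h2ne⟩ := step1
  set b := h2 i 0 with hbdef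
  have hb : h2 i = Equiv.addRight b := transSub_eq_addRight h2T
  have hbne : b ≠ 0 := by
    intro hcon
    apply h2ne
    rw [hb, hcon]
    ext v; simp
  obtain ⟨π, hπQ, hπ0, hπb⟩ := (hX5 i).1 0 b 0 a (Ne.symm hbne) (Ne.symm ha)
  obtain ⟨z, hzX, hz, σz, Hz, hσz, hzi⟩ := hπQ
  set g3 := z * g2 * z⁻¹ with hg3def
  have hg3K : g3 ∈ KSet (X : Set (Perm (VA p d m))) := conj_mem_kset hX1 hzX hg2K
  have Hg3 := Hz.conj Hg2
  refine ⟨g3, hg3K, _, Hg3, ?_⟩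
  have hσzi : σz.symm i = i := by rw [Equiv.symm_apply_eq, hσz]
  simp only [hσzi, hzi]
  have hT : π * h2 i * π⁻¹ ∈ TransSub (QA p d) := (hX5 i).2.2 π ⟨z, hzX, hz, σz, Hz, hσz, hzi⟩ _ h2T
  have := transSub_eq_addRight hT
  rw [this]
  congr 1
  simp only [Perm.mul_apply]
  have hπinv0 : π⁻¹ 0 = 0 := by
    rw [Perm.inv_def, Equiv.symm_apply_eq]
    exact hπ0.symm
  rw [hπinv0, hb]
  have : Equiv.addRight b 0 = 0 + b := rfl
  rw [this, zero_add, hπb]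

end KFacts

section Zexists

variable {p d m : ℕ} {X : Subgroup (Perm (VA p d m))} {C : Set (VA p d m)}

/-- a nontrivial element of `K` whose components are all translations. -/
theorem exists_ktrans_ne_one (hAff : AlphabetAffine (X : Set (Perm (VA p d m))) C) :
    ∃ z ∈ KSet (X : Set (Perm (VA p d m))), z ≠ 1 ∧ ∃ h, IsQAutPair z h 1 ∧
      ∀ i, h i ∈ TransSub (QA p d) := by
  classical
  obtain ⟨g0, hg0K, hg0ne⟩ := hAff.2.2.1
  obtain ⟨h0, Hh0⟩ := hg0K.2
  suffices key : ∀ n : ℕ, ∀ g : Perm (VA p d m), ∀ h : Fin m → Perm (QA p d),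
      g ∈ KSet (X : Set (Perm (VA p d m))) → g ≠ 1 → IsQAutPair g h 1 →
      (Finset.univ.filter (fun i => h i ∉ TransSub (QA p d))).card = n →
      ∃ z ∈ KSet (X : Set (Perm (VA p d m))), z ≠ 1 ∧ ∃ h', IsQAutPair z h' 1 ∧
        ∀ i, h' i ∈ TransSub (QA p d) by
    exact key _ g0 h0 hg0K hg0ne Hh0 rfl
  intro n
  induction n using Nat.strong_induction_on with
  | _ n ih =>
    intro g h hgK hgne Hg hcard
    by_cases hS : (Finset.univ.filter (fun i => h i ∉ TransSub (QA p d))).card = 0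
    · refine ⟨g, hgK, hgne, h, Hg, fun i => ?_⟩
      rw [Finset.card_eq_zero, Finset.filter_eq_empty_iff] at hS
      have := hS (Finset.mem_univ i)
      simpa using this
    -- pick a bad entry i
    obtain ⟨i, hi⟩ : ∃ i, i ∈ Finset.univ.filter (fun i => h i ∉ TransSub (QA p d)) := by
      rcases Finset.card_pos.mp (Nat.pos_of_ne_zero hS) with ⟨i, hi⟩
      exact ⟨i, hi⟩
    have hiT : h i ∉ TransSub (QA p d) := by
      simpa using (Finset.mem_filter.mp hi).2
    -- h i does not centralize the translations
    have hnc : ∃ t ∈ TransSub (QA p d), h i * t ≠ t * h i := by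
      by_contra hcon
      push_neg at hcon
      exact hiT (mem_transSub_of_comm hcon)
    obtain ⟨t, htT, htne⟩ := hnc
    -- lift t at entry i
    obtain ⟨s, hsK, hs, Hs, hsi⟩ := exists_trans_comp hAff i (t 0)
    have hsit : hs i = t := by rw [hsi, ← transSub_eq_addRight htT]
    -- commutator
    set c := g * s * g⁻¹ * s⁻¹ with hcdef
    have hcK : c ∈ KSet (X : Set (Perm (VA p d m))) :=
      kset_mul_mem (kset_mul_mem (kset_mul_mem hgK hsK) (kset_inv_mem hgK)) (kset_inv_mem hsK)
    have Hc : IsQAutPair c (fun j => h j * hs j * (h j)⁻¹ * (hs j)⁻¹) 1 := by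
      have := ((Hg.mul1 Hs).mul1 Hg.inv1).mul1 Hs.inv1
      exact this
    have hci : (fun j => h j * hs j * (h j)⁻¹ * (hs j)⁻¹) i ≠ 1 := by
      simp only [hsit]
      intro hcon
      apply htne
      have h2 : h i * t * (h i)⁻¹ = t := by
        have := congrArg (fun z => z * t) hcon
        simpa [mul_assoc] using this
      calc h i * t = (h i * t * (h i)⁻¹) * h i := by group
        _ = t * h i := by rw [h2]
    have hcne : c ≠ 1 := by
      intro hcon
      apply hci
      apply Equiv.ext
      intro x
      have := Hc (fun _ => x) i
      rw [hcon] at this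
      exact (this.symm : _)
    -- the bad set shrinks
    have hsub : (Finset.univ.filter
          (fun j => (fun j => h j * hs j * (h j)⁻¹ * (hs j)⁻¹) j ∉ TransSub (QA p d)))
        ⊆ (Finset.univ.filter (fun j => h j ∉ TransSub (QA p d))).erase i := by
      intro j hj
      simp only [Finset.mem_filter, Finset.mem_univ, true_and] at hj
      rw [Finset.mem_erase]
      constructor
      · intro hji
        subst hji
        apply hj
        rw [hsit]
        have h1 : h j * t * (h j)⁻¹ * t⁻¹ = (h j * t * (h j)⁻¹) * t⁻¹ := by group
        rw [h1]
        exact (TransSub (QA p d)).mul_mem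
          ((hAff.2.2.2.2 j).2.2 _ (mem_indQ_of_pair1 hgK.1 Hg j) t htT)
          ((TransSub (QA p d)).inv_mem htT)
      · simp only [Finset.mem_filter, Finset.mem_univ, true_and]
        intro hjT
        apply hj
        have h1 : h j * hs j * (h j)⁻¹ * (hs j)⁻¹ = h j * (hs j * (h j)⁻¹ * (hs j)⁻¹) := by group
        rw [h1]
        refine (TransSub (QA p d)).mul_mem hjT ?_
        exact (hAff.2.2.2.2 j).2.2 _ (mem_indQ_of_pair1 hsK.1 Hs j) _
          ((TransSub (QA p d)).inv_mem hjT)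
    have hlt : (Finset.univ.filter
          (fun j => (fun j => h j * hs j * (h j)⁻¹ * (hs j)⁻¹) j ∉ TransSub (QA p d))).card < n := by
      calc _ ≤ ((Finset.univ.filter (fun j => h j ∉ TransSub (QA p d))).erase i).card :=
            Finset.card_le_card hsub
        _ < (Finset.univ.filter (fun j => h j ∉ TransSub (QA p d))).card :=
            Finset.card_erase_lt_of_mem hi
        _ = n := hcard
    exact ih _ hlt c _ hcK hcne Hc rfl

end Zexists

section NTrans

variable {p d m : ℕ} {X : Subgroup (Perm (VA p d m))} {C : Set (VA p d m)}
variable {N : Subgroup (Perm (VA p d m))}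

theorem comp_apply_of_pair1 {g : Perm (VA p d m)} {k : Fin m → Perm (QA p d)}
    (H : IsQAutPair g k 1) (i : Fin m) (x : QA p d) :
    k i x = g (fun _ => x) i := (H (fun _ => x) i).symm

/-- `N` is stable under conjugation by all of `X`. -/
theorem conj_mem_N (hX1 : ∀ g ∈ (X : Set (Perm (VA p d m))), IsQAut g)
    (hN1 : (N : Set (Perm (VA p d m))) ⊆ KSet (X : Set (Perm (VA p d m))))
    (hN2 : IsPGroup p N)
    (hN3 : ∀ g ∈ KSet (X : Set (Perm (VA p d m))), ∀ t ∈ N, g * t * g⁻¹ ∈ N)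
    (hN4 : ∀ P : Subgroup (Perm (VA p d m)),
      (P : Set (Perm (VA p d m))) ⊆ KSet (X : Set (Perm (VA p d m))) →
      IsPGroup p P →
      (∀ g ∈ KSet (X : Set (Perm (VA p d m))), ∀ t ∈ P, g * t * g⁻¹ ∈ P) → P ≤ N)
    {x n : Perm (VA p d m)} (hx : x ∈ X) (hn : n ∈ N) :
    x * n * x⁻¹ ∈ N := by
  set f := (MulAut.conj x).toMonoidHom with hfdef
  have hf : ∀ y : Perm (VA p d m), f y = x * y * x⁻¹ := fun y => rfl
  have hP := hN4 (N.map f) ?_ (hN2.map f) ?_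
  · exact hP ⟨n, hn, rfl⟩
  · rintro y ⟨n', hn', rfl⟩
    rw [hf]
    exact conj_mem_kset hX1 hx (hN1 hn')
  · rintro g hg t ⟨n', hn', rfl⟩
    have hinner : (x⁻¹ * g * x) * n' * (x⁻¹ * g * x)⁻¹ ∈ N := by
      apply hN3
      · have := conj_mem_kset hX1 (X.inv_mem hx) hg
        simpa using this
      · exact hn'
    refine ⟨_, hinner, ?_⟩
    rw [hf, hf]
    group

/-- Step 3 : each component of each element of `N` is a translation. -/
theorem comp_mem_transSub_of_mem_N (hp : p.Prime) (hd : 1 ≤ d)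
    (hAff : AlphabetAffine (X : Set (Perm (VA p d m))) C)
    (hN1 : (N : Set (Perm (VA p d m))) ⊆ KSet (X : Set (Perm (VA p d m))))
    (hN2 : IsPGroup p N)
    (hN3 : ∀ g ∈ KSet (X : Set (Perm (VA p d m))), ∀ t ∈ N, g * t * g⁻¹ ∈ N)
    (hN4 : ∀ P : Subgroup (Perm (VA p d m)),
      (P : Set (Perm (VA p d m))) ⊆ KSet (X : Set (Perm (VA p d m))) →
      IsPGroup p P →
      (∀ g ∈ KSet (X : Set (Perm (VA p d m))), ∀ t ∈ P, g * t * g⁻¹ ∈ P) → P ≤ N)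
    {n : Perm (VA p d m)} {h : Fin m → Perm (QA p d)}
    (hn : n ∈ N) (Hn : IsQAutPair n h 1) (i : Fin m) :
    h i ∈ TransSub (QA p d) := by
  classical
  haveI : Fact p.Prime := ⟨hp⟩
  haveI : NeZero p := ⟨hp.pos.ne'⟩
  obtain ⟨hX1, hX2, hX3, hX4, hX5⟩ := hAff
  -- the component group of `N` at entry `i`
  set Pi : Subgroup (Perm (QA p d)) :=
    { carrier := {u | ∃ g ∈ N, ∃ k, IsQAutPair g k 1 ∧ k i = u}
      one_mem' := ⟨1, N.one_mem, fun _ => 1, IsQAutPair.one, rfl⟩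
      mul_mem' := by
        rintro u v ⟨g, hg, k, Hk, rfl⟩ ⟨g', hg', k', Hk', rfl⟩
        exact ⟨g * g', N.mul_mem hg hg', _, Hk.mul1 Hk', rfl⟩
      inv_mem' := by
        rintro u ⟨g, hg, k, Hk, rfl⟩
        exact ⟨g⁻¹, N.inv_mem hg, _, Hk.inv1, rfl⟩ } with hPidef
  have hPimem : ∀ u, u ∈ Pi ↔ ∃ g ∈ N, ∃ k, IsQAutPair g k 1 ∧ k i = u := fun u => Iff.rfl
  -- Pi is a p-group
  have hPiP : IsPGroup p Pi := by
    rintro ⟨u, hu⟩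
    obtain ⟨g, hg, k, Hk, hki⟩ := id hu
    obtain ⟨e, he⟩ := hN2 ⟨g, hg⟩
    have hge : g ^ p ^ e = 1 := by
      have := congrArg (fun z : ↥N => (z : Perm (VA p d m))) he
      simpa using this
    refine ⟨e, ?_⟩
    have hupow : u ^ p ^ e = 1 := by
      have Hpow := Hk.pow1 (p ^ e)
      rw [hge] at Hpow
      apply Equiv.ext
      intro x
      have h1 : ((fun j => k j ^ p ^ e) i) x = (1 : Perm (VA p d m)) (fun _ => x) i :=
        comp_apply_of_pair1 Hpow i x
      simp only [Perm.one_apply] at h1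
      rw [← hki]
      simpa using h1
    apply Subtype.ext
    have hco : (((⟨u, hu⟩ : ↥Pi) ^ p ^ e : ↥Pi) : Perm (QA p d)) = u ^ p ^ e := by
      push_cast
      rfl
    rw [hco, hupow]
    rfl
  -- Pi is contained in indQ
  have hPiQ : ∀ u ∈ Pi, u ∈ indQ (X : Set (Perm (VA p d m))) i := by
    rintro u ⟨g, hg, k, Hk, rfl⟩
    exact mem_indQ_of_pair1 (hN1 hg).1 Hk i
  -- Pi is normalized by indQ
  have hPin : ∀ π ∈ indQ (X : Set (Perm (VA p d m))) i, ∀ u ∈ Pi, π * u * π⁻¹ ∈ Pi := by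
    rintro π ⟨x, hxX, hx, σx, Hx, hσx, rfl⟩ u ⟨g, hg, k, Hk, rfl⟩
    have hmem : x * g * x⁻¹ ∈ N := conj_mem_N hX1 hN1 hN2 hN3 hN4 hxX hg
    have hsymm : σx.symm i = i := by rw [Equiv.symm_apply_eq, hσx]
    refine ⟨x * g * x⁻¹, hmem, _, Hx.conj Hk, ?_⟩
    simp only [hsymm]
  -- T is a p-group
  have hTP : IsPGroup p (TransSub (QA p d)) := by
    apply isPGroup_transSub p hp
    intro a
    funext j
    simp [ZMod.natCast_self]
  -- Pi normalizes T
  have hPinorm : Pi ≤ Subgroup.normalizer (TransSub (QA p d) : Set (Perm (QA p d))) := by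
    intro u hu
    rw [Subgroup.mem_normalizer_iff]
    intro t
    constructor
    · intro ht
      exact (hX5 i).2.2 u (hPiQ u hu) t ht
    · intro ht
      have h2 := (hX5 i).2.2 u⁻¹ (indQ_inv_mem (hPiQ u hu)) _ ht
      have : u⁻¹ * (u * t * u⁻¹) * u⁻¹⁻¹ = t := by group
      rwa [this] at h2
  -- the join is a p-group
  have hPT : IsPGroup p (Pi ⊔ TransSub (QA p d) : Subgroup (Perm (QA p d))) :=
    IsPGroup.to_sup_of_normal_right' hPiP hTP hPinorm
  -- indQ-stabilizer-conjugation preserves the join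
  have hconjPT : ∀ π ∈ indQ (X : Set (Perm (VA p d m))) i,
      ∀ ρ ∈ (Pi ⊔ TransSub (QA p d) : Subgroup (Perm (QA p d))),
      π * ρ * π⁻¹ ∈ (Pi ⊔ TransSub (QA p d) : Subgroup (Perm (QA p d))) := by
    intro π hπ ρ hρ
    set f := (MulAut.conj π).toMonoidHom with hfdef
    have h1 : (Pi ⊔ TransSub (QA p d)).map f ≤ Pi ⊔ TransSub (QA p d) := by
      rw [Subgroup.map_sup]
      apply sup_le
      · rintro y ⟨u, hu, rfl⟩
        exact Subgroup.mem_sup_left (hPin π hπ u hu)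
      · rintro y ⟨t, ht, rfl⟩
        exact Subgroup.mem_sup_right ((hX5 i).2.2 π hπ t ht)
    exact h1 ⟨ρ, hρ, rfl⟩
  -- any element of the join fixing 0 is trivial
  have hstab : ∀ ρ ∈ (Pi ⊔ TransSub (QA p d) : Subgroup (Perm (QA p d))),
      ρ 0 = 0 → ρ = 1 := by
    by_contra hcon
    push_neg at hcon
    obtain ⟨ρ₀, hρ₀PT, hρ₀0, hρ₀ne⟩ := hcon
    obtain ⟨v₁, hv₁⟩ : ∃ v₁, ρ₀ v₁ ≠ v₁ := by
      by_contra hc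
      push_neg at hc
      exact hρ₀ne (Equiv.ext hc)
    have hv₁ne : v₁ ≠ 0 := by
      intro hc; subst hc; exact hv₁ hρ₀0
    set S : Subgroup (Perm (QA p d)) :=
      (Pi ⊔ TransSub (QA p d)) ⊓ MulAction.stabilizer (Perm (QA p d)) (0 : QA p d) with hSdef
    have hSP : IsPGroup p S := hPT.to_le inf_le_left
    have hSfix : ∀ s : Perm (QA p d), s ∈ S → s 0 = 0 := by
      intro s hs
      have := (Subgroup.mem_inf.mp hs).2
      rwa [MulAction.mem_stabilizer_iff, Perm.smul_def] at this
    letI act : MulAction ↥S {v : QA p d // v ≠ 0} :=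
      { smul := fun s v => ⟨(s : Perm (QA p d)) v.1, by
          intro hc
          apply v.2
          have h0 : (s : Perm (QA p d)) v.1 = (s : Perm (QA p d)) 0 := by
            rw [hc, hSfix _ s.2]
          exact (s : Perm (QA p d)).injective h0⟩
        one_smul := fun v => Subtype.ext rfl
        mul_smul := fun s s' v => Subtype.ext rfl }
    have hcard : ¬ p ∣ Nat.card {v : QA p d // v ≠ 0} := by
      have hcQ : Fintype.card (QA p d) = p ^ d := by
        rw [Fintype.card_fun, ZMod.card, Fintype.card_fin]
      have hc1 : Nat.card {v : QA p d // v ≠ 0} = p ^ d - 1 := by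
        rw [Nat.card_eq_fintype_card]
        have := Fintype.card_subtype_compl (fun v : QA p d => v = 0)
        rw [Fintype.card_subtype_eq (0 : QA p d), hcQ] at this
        exact this
      rw [hc1]
      intro hdvd
      have h2 : p ∣ p ^ d := dvd_pow_self p (by omega)
      have h3 : p ∣ p ^ d - (p ^ d - 1) := Nat.dvd_sub h2 hdvd
      have h4 : 1 ≤ p ^ d := Nat.one_le_pow _ _ hp.pos
      have h5 : p ^ d - (p ^ d - 1) = 1 := by omega
      rw [h5] at h3
      have := Nat.le_of_dvd one_pos h3
      have := hp.two_le
      omega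
    obtain ⟨⟨v, hvne⟩, hvfix⟩ :=
      hSP.nonempty_fixed_point_of_prime_not_dvd_card {v : QA p d // v ≠ 0} hcard
    rw [MulAction.mem_fixedPoints] at hvfix
    -- drag ρ₀'s moved point onto v
    obtain ⟨π, hπQ, hπ0, hπv⟩ := (hX5 i).1 0 v₁ 0 v (Ne.symm hv₁ne) (Ne.symm hvne)
    set s := π * ρ₀ * π⁻¹ with hsdef
    have hsS : s ∈ S := by
      rw [hSdef, Subgroup.mem_inf]
      constructor
      · exact hconjPT π hπQ ρ₀ hρ₀PT
      · rw [MulAction.mem_stabilizer_iff, Perm.smul_def]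
        have hπinv0 : π⁻¹ 0 = 0 := by
          rw [Perm.inv_def, Equiv.symm_apply_eq]; exact hπ0.symm
        simp only [hsdef, Perm.mul_apply, hπinv0, hρ₀0, hπ0]
    have := hvfix ⟨s, hsS⟩
    have hsv : s v = v := congrArg Subtype.val this
    apply hv₁
    have hπinvv : π⁻¹ v = v₁ := by
      rw [Perm.inv_def, Equiv.symm_apply_eq]; exact hπv.symm
    have : π (ρ₀ v₁) = π v₁ := by
      have h6 : π (ρ₀ (π⁻¹ v)) = v := by
        exact hsv
      rw [hπinvv] at h6
      rw [h6, hπv]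
    exact π.injective this
  -- conclude : h i is a translation
  have hhiPi : h i ∈ Pi := ⟨n, hn, h, Hn, rfl⟩
  set u := h i with hudef
  set ρ := (Equiv.addRight (u 0))⁻¹ * u with hρdef
  have hρPT : ρ ∈ (Pi ⊔ TransSub (QA p d) : Subgroup (Perm (QA p d))) := by
    apply Subgroup.mul_mem
    · exact Subgroup.mem_sup_right ((TransSub (QA p d)).inv_mem (addRight_mem_transSub _))
    · exact Subgroup.mem_sup_left hhiPi
  have hρ0 : ρ 0 = 0 := by
    apply (Equiv.addRight (u 0)).injective
    have h1 : (Equiv.addRight (u 0)) (ρ 0) = u 0 := by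
      simp only [hρdef, Perm.mul_apply]
      exact (Equiv.addRight (u 0)).apply_symm_apply (u 0)
    rw [h1]
    have : (Equiv.addRight (u 0)) 0 = 0 + u 0 := rfl
    rw [this, zero_add]
  have hρ1 : ρ = 1 := hstab ρ hρPT hρ0
  have : u = Equiv.addRight (u 0) := by
    have h7 : (Equiv.addRight (u 0)) * ρ = u := by rw [hρdef]; group
    rw [hρ1, mul_one] at h7
    exact h7.symm
  rw [hudef] at this ⊢
  rw [this]
  exact addRight_mem_transSub _

end NTrans

section Wt2

variable {p d m : ℕ} {X : Subgroup (Perm (VA p d m))} {C : Set (VA p d m)}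

/-- doubly-supported vertex. -/
def e2 (i j : Fin m) (a b : QA p d) : VA p d m :=
  fun t => if t = i then a else if t = j then b else 0

theorem e2_self₁ {i j : Fin m} (a b : QA p d) : e2 i j a b i = a := by simp [e2]

theorem e2_self₂ {i j : Fin m} (hij : i ≠ j) (a b : QA p d) : e2 i j a b j = b := by
  simp [e2, hij.symm]

theorem e2_other {i j t : Fin m} (hti : t ≠ i) (htj : t ≠ j) (a b : QA p d) :
    e2 i j a b t = 0 := by simp [e2, hti, htj]

theorem hammingDist_e2_zero {i j : Fin m} (hij : i ≠ j) {a b : QA p d}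
    (ha : a ≠ 0) (hb : b ≠ 0) : hammingDist (e2 i j a b) 0 = 2 := by
  classical
  have : ({t | e2 i j a b t ≠ (0 : VA p d m) t} : Finset (Fin m)) = {i, j} := by
    ext t
    simp only [Finset.mem_filter, Finset.mem_univ, true_and, Finset.mem_insert,
      Finset.mem_singleton]
    constructor
    · intro ht
      by_contra hc
      push_neg at hc
      exact ht (by simpa using e2_other hc.1 hc.2 a b)
    · rintro (rfl | rfl)
      · simpa [e2_self₁] using ha
      · simpa [e2_self₂ hij] using hb
  unfold hammingDist
  rw [this]
  rw [Finset.card_insert_of_notMem (by simpa using hij), Finset.card_singleton]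

theorem e2_mem_distSet2 (hδ : ∀ u ∈ C, ∀ v ∈ C, u ≠ v → 5 ≤ hammingDist u v)
    (h0 : (0 : VA p d m) ∈ C) {i j : Fin m} (hij : i ≠ j) {a b : QA p d}
    (ha : a ≠ 0) (hb : b ≠ 0) : e2 i j a b ∈ distSet C 2 := by
  constructor
  · exact ⟨0, h0, hammingDist_e2_zero hij ha hb⟩
  · intro c hc
    by_cases hc0 : c = 0
    · subst hc0
      rw [hammingDist_e2_zero hij ha hb]
    · have h5 : 5 ≤ hammingDist (0 : VA p d m) c := hδ 0 h0 c hc (fun hh => hc0 hh.symm)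
      have htri : hammingDist (0 : VA p d m) c ≤
          hammingDist (0 : VA p d m) (e2 i j a b) + hammingDist (e2 i j a b) c :=
        hammingDist_triangle _ _ _
      rw [hammingDist_comm (0 : VA p d m) (e2 i j a b), hammingDist_e2_zero hij ha hb] at htri
      omega

theorem nearest_unique (hδ : ∀ u ∈ C, ∀ v ∈ C, u ≠ v → 5 ≤ hammingDist u v)
    (h0 : (0 : VA p d m) ∈ C) {i j : Fin m} (hij : i ≠ j) {a b : QA p d}
    (ha : a ≠ 0) (hb : b ≠ 0) {c : VA p d m} (hc : c ∈ C)
    (hdist : hammingDist (e2 i j a b) c ≤ 2) : c = 0 := by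
  by_contra hc0
  have h5 : 5 ≤ hammingDist (0 : VA p d m) c := hδ 0 h0 c hc (fun hh => hc0 hh.symm)
  have htri : hammingDist (0 : VA p d m) c ≤
      hammingDist (0 : VA p d m) (e2 i j a b) + hammingDist (e2 i j a b) c :=
    hammingDist_triangle _ _ _
  rw [hammingDist_comm (0 : VA p d m) (e2 i j a b), hammingDist_e2_zero hij ha hb] at htri
  omega

/-- the key dragging lemma : an `(X,2)`-transitive stabiliser moves a pair of
nonzero coordinates of an element of the invariant set `W` anywhere. -/
theorem dragW (hAff : AlphabetAffine (X : Set (Perm (VA p d m))) C)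
    (hNT : NbrTrans (X : Set (Perm (VA p d m))) C 2)
    (hδ : ∀ u ∈ C, ∀ v ∈ C, u ≠ v → 5 ≤ hammingDist u v)
    (h0 : (0 : VA p d m) ∈ C)
    (W : Set (VA p d m))
    (hWinv : ∀ x ∈ X, x (0 : VA p d m) = 0 → ∀ w ∈ W, x w ∈ W)
    {w : VA p d m} (hw : w ∈ W) {i j : Fin m} (hij : i ≠ j)
    (hwi : w i ≠ 0) (hwj : w j ≠ 0) {k l : Fin m} (hkl : k ≠ l)
    {a b : QA p d} (ha : a ≠ 0) (hb : b ≠ 0) :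
    ∃ w' ∈ W, w' k = a ∧ w' l = b := by
  classical
  have hν : e2 i j (w i) (w j) ∈ distSet C 2 := e2_mem_distSet2 hδ h0 hij hwi hwj
  have hν' : e2 k l a b ∈ distSet C 2 := e2_mem_distSet2 hδ h0 hkl ha hb
  obtain ⟨x, hxX, hxν⟩ := hNT 2 le_rfl _ hν _ hν'
  obtain ⟨h, σ, Hx⟩ := hAff.1 x hxX
  -- x fixes 0
  have hx0C : x 0 ∈ C := by
    have himg := hAff.2.1 x hxX
    rw [← himg]
    exact ⟨0, h0, rfl⟩
  have hx0 : x (0 : VA p d m) = 0 := by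
    have hd2 : hammingDist (e2 k l a b) (x 0) ≤ 2 := by
      rw [← hxν, Hx.hammingDist_map, hammingDist_e2_zero hij hwi hwj]
    exact nearest_unique hδ h0 hkl ha hb hx0C hd2
  have hcomp0 : ∀ t, h t 0 = 0 := by
    intro t
    have := Hx (0 : VA p d m) t
    rw [hx0] at this
    exact this.symm
  have hcompne : ∀ t (c : QA p d), c ≠ 0 → h t c ≠ 0 := by
    intro t c hcne hc
    apply hcne
    apply (h t).injective
    rw [hc, hcomp0]
  -- evaluate the image of ν
  have heval : ∀ t, h t (e2 i j (w i) (w j) (σ.symm t)) = e2 k l a b t := by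
    intro t
    have := Hx (e2 i j (w i) (w j)) t
    rw [hxν] at this
    exact this.symm
  have hσi : σ i = k ∨ σ i = l := by
    have h1 := heval (σ i)
    rw [Equiv.symm_apply_apply, e2_self₁] at h1
    by_contra hcon
    push_neg at hcon
    rw [e2_other hcon.1 hcon.2] at h1
    exact hcompne (σ i) (w i) hwi h1
  have hσj : σ j = k ∨ σ j = l := by
    have h1 := heval (σ j)
    rw [Equiv.symm_apply_apply, e2_self₂ hij] at h1
    by_contra hcon
    push_neg at hcon
    rw [e2_other hcon.1 hcon.2] at h1
    exact hcompne (σ j) (w j) hwj h1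
  have hσij : σ i ≠ σ j := fun hh => hij (σ.injective hh)
  have hwmem : x w ∈ W := hWinv x hxX hx0 w hw
  have hxw : ∀ t, x w t = h t (w (σ.symm t)) := fun t => Hx w t
  rcases hσi with hik | hil
  · -- σ i = k, hence σ j = l
    have hjl : σ j = l := by
      rcases hσj with h' | h'
      · exact absurd (hik.trans h'.symm) hσij
      · exact h'
    have hsk : σ.symm k = i := by rw [Equiv.symm_apply_eq]; exact hik.symm
    have hsl : σ.symm l = j := by rw [Equiv.symm_apply_eq]; exact hjl.symm
    have h1 := heval k
    rw [hsk, e2_self₁, e2_self₁] at h1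
    have h2 := heval l
    rw [hsl, e2_self₂ hij, e2_self₂ hkl] at h2
    refine ⟨x w, hwmem, ?_, ?_⟩
    · rw [hxw k, hsk]; exact h1
    · rw [hxw l, hsl]; exact h2
  · -- σ i = l, hence σ j = k
    have hjk : σ j = k := by
      rcases hσj with h' | h'
      · exact h'
      · exact absurd (hil.trans h'.symm) hσij
    have hsk : σ.symm k = j := by rw [Equiv.symm_apply_eq]; exact hjk.symm
    have hsl : σ.symm l = i := by rw [Equiv.symm_apply_eq]; exact hil.symm
    have h1 := heval k
    rw [hsk, e2_self₂ hij, e2_self₁] at h1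
    have h2 := heval l
    rw [hsl, e2_self₁, e2_self₂ hkl] at h2
    refine ⟨x w, hwmem, ?_, ?_⟩
    · rw [hxw k, hsk]; exact h1
    · rw [hxw l, hsl]; exact h2

end Wt2

theorem stmt6 (p d m : ℕ) (hp : p.Prime) (hd : 1 ≤ d)
    (C : Set (VA p d m)) (X : Subgroup (Perm (VA p d m)))
    (hAff : AlphabetAffine (X : Set (Perm (VA p d m))) C)
    (hNT : NbrTrans (X : Set (Perm (VA p d m))) C 2)
    (hδ : ∀ u ∈ C, ∀ v ∈ C, u ≠ v → 5 ≤ hammingDist u v)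
    (h0 : (0 : VA p d m) ∈ C)
    (N : Subgroup (Perm (VA p d m)))
    (hN1 : (N : Set (Perm (VA p d m))) ⊆ KSet (X : Set (Perm (VA p d m))))
    (hN2 : IsPGroup p N)
    (hN3 : ∀ g ∈ KSet (X : Set (Perm (VA p d m))), ∀ t ∈ N, g * t * g⁻¹ ∈ N)
    (hN4 : ∀ P : Subgroup (Perm (VA p d m)),
      (P : Set (Perm (VA p d m))) ⊆ KSet (X : Set (Perm (VA p d m))) →
      IsPGroup p P →
      (∀ g ∈ KSet (X : Set (Perm (VA p d m))), ∀ t ∈ P, g * t * g⁻¹ ∈ P) → P ≤ N)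
    (W : Set (VA p d m))
    (hW : W = {v | ∃ g ∈ N, g (0 : VA p d m) = v})
    -- `W` is not the binary repetition code
    (hnr : p ^ d ≠ 2 ∨ W ≠ ({0, fun _ _ => (1 : ZMod p)} : Set (VA p d m))) :
    (p ^ d) ^ 2 ∣ Nat.card W := by
  classical
  haveI hfact : Fact p.Prime := ⟨hp⟩
  haveI : NeZero p := ⟨hp.pos.ne'⟩
  haveI : Fact (1 < p) := ⟨hp.one_lt⟩
  subst hW
  set Wset : Set (VA p d m) := {v | ∃ g ∈ N, g (0 : VA p d m) = v} with hWsetdef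
  -- every element of N is a global translation
  have hntrans : ∀ n ∈ N, ∀ α : VA p d m, n α = α + n 0 := by
    intro n hn α
    obtain ⟨hnX, h, Hn⟩ := hN1 hn
    funext t
    have hT : h t ∈ TransSub (QA p d) :=
      comp_mem_transSub_of_mem_N hp hd hAff hN1 hN2 hN3 hN4 hn Hn t
    obtain ⟨a, ha⟩ := hT
    have h1 := Hn α t
    have h2 := Hn 0 t
    rw [ha] at h1 h2
    rw [Pi.add_apply, h1, h2]
    show α t + a = α t + ((0 : QA p d) + a)
    rw [zero_add]
  -- basic closure properties of Wset
  have hW0mem : (0 : VA p d m) ∈ Wset := ⟨1, N.one_mem, rfl⟩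
  have hWadd : ∀ a b : VA p d m, a ∈ Wset → b ∈ Wset → a + b ∈ Wset := by
    rintro a b ⟨g, hg, rfl⟩ ⟨g', hg', rfl⟩
    refine ⟨g' * g, N.mul_mem hg' hg, ?_⟩
    show g' (g 0) = g 0 + g' 0
    rw [hntrans g' hg' (g 0)]
  have hWneg : ∀ a : VA p d m, a ∈ Wset → -a ∈ Wset := by
    rintro a ⟨g, hg, rfl⟩
    refine ⟨g⁻¹, N.inv_mem hg, ?_⟩
    apply g.injective
    rw [← Perm.mul_apply, mul_inv_cancel, Perm.one_apply, hntrans g hg (-(g 0))]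
    abel
  -- Wset ⊆ C
  have hWC : ∀ w ∈ Wset, w ∈ C := by
    rintro w ⟨g, hg, rfl⟩
    have himg := hAff.2.1 g (hN1 hg).1
    rw [← himg]
    exact ⟨0, h0, rfl⟩
  -- invariance of Wset under the stabiliser of 0 in X
  have hWinv : ∀ x ∈ X, x (0 : VA p d m) = 0 → ∀ w ∈ Wset, x w ∈ Wset := by
    intro x hxX hx0 w hw
    obtain ⟨g, hg, rfl⟩ := hw
    refine ⟨x * g * x⁻¹, conj_mem_N hAff.1 hN1 hN2 hN3 hN4 hxX hg, ?_⟩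
    have hxinv0 : x⁻¹ (0 : VA p d m) = 0 := by
      rw [Perm.inv_def, Equiv.symm_apply_eq]; exact hx0.symm
    show x (g (x⁻¹ 0)) = x (g 0)
    rw [hxinv0]
  -- Wset is nontrivial
  have hW0 : ∃ w ∈ Wset, w ≠ 0 := by
    obtain ⟨z, hzK, hzne, h, Hz, hT⟩ := exists_ktrans_ne_one hAff
    have hZN : z ∈ N := by
      have := hN4
        { carrier := {g | g ∈ KSet (X : Set (Perm (VA p d m))) ∧
            ∃ h, IsQAutPair g h 1 ∧ ∀ i, h i ∈ TransSub (QA p d)}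
          one_mem' := ⟨kset_one_mem, fun _ => 1, IsQAutPair.one,
            fun _ => (TransSub (QA p d)).one_mem⟩
          mul_mem' := by
            rintro g g' ⟨hgK, k, Hg, hT1⟩ ⟨hgK', k', Hg', hT2⟩
            exact ⟨kset_mul_mem hgK hgK', _, Hg.mul1 Hg',
              fun i => (TransSub (QA p d)).mul_mem (hT1 i) (hT2 i)⟩
          inv_mem' := by
            rintro g ⟨hgK, k, Hg, hT1⟩
            exact ⟨kset_inv_mem hgK, _, Hg.inv1,
              fun i => (TransSub (QA p d)).inv_mem (hT1 i)⟩ } ?_ ?_ ?_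
      · exact this ⟨hzK, h, Hz, hT⟩
      · intro g hg
        exact hg.1
      · -- p-group : each element is a global translation
        rintro ⟨z', hz'⟩
        obtain ⟨hz'K, h', Hz', hT'⟩ := hz'
        have hwvec : ∃ w : VA p d m, ∀ α, z' α = α + w := by
          refine ⟨fun i => h' i 0, fun α => ?_⟩
          funext t
          obtain ⟨a, ha⟩ := hT' t
          have h1 := Hz' α t
          rw [ha] at h1
          rw [Pi.add_apply, h1, ha 0]
          show α t + a = α t + ((0 : QA p d) + a)
          rw [zero_add]
        obtain ⟨wv, hwv⟩ := hwvec
        refine ⟨1, ?_⟩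
        apply Subtype.ext
        have hzp : z' ^ p ^ 1 = 1 := by
          apply Equiv.ext
          intro v
          rw [transSub_pow_apply hwv (p ^ 1) v]
          have hz0 : (p ^ 1 : ℕ) • wv = 0 := by
            rw [pow_one]
            funext i jj
            simp [Pi.smul_apply, nsmul_eq_mul, ZMod.natCast_self]
          rw [hz0, add_zero]
          rfl
        push_cast
        rw [hzp]
      · -- conjugation-stable
        rintro g hgK z' ⟨hz'K, h', Hz', hT'⟩
        obtain ⟨hgX, k, Hk⟩ := id hgK
        refine ⟨conj_mem_kset hAff.1 hgX hz'K, _, Hk.conj Hz', fun i => ?_⟩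
        exact (hAff.2.2.2.2 i).2.2 (k i) (mem_indQ_of_pair1 hgX Hk i) _ (hT' _)
    refine ⟨z 0, ⟨z, hZN, rfl⟩, ?_⟩
    intro hc
    apply hzne
    apply Equiv.ext
    intro α
    rw [hntrans z hZN α, hc, add_zero]
    rfl
  -- a pair of nonzero coordinates of a nonzero element of Wset
  obtain ⟨w₀, hw₀W, hw₀ne⟩ := hW0
  have h5 : 5 ≤ hammingDist w₀ (0 : VA p d m) := hδ w₀ (hWC _ hw₀W) 0 h0 hw₀ne
  have hcardeq : hammingDist w₀ (0 : VA p d m) =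
      (Finset.univ.filter (fun t => w₀ t ≠ (0 : VA p d m) t)).card := by
    simp [hammingDist, Finset.filter_congr_decidable]
  obtain ⟨i, hiS, j, hjS, hij⟩ :=
    Finset.one_lt_card.mp (show 1 <
      (Finset.univ.filter (fun t => w₀ t ≠ (0 : VA p d m) t)).card by omega)
  have hw₀i : w₀ i ≠ 0 := by simpa using (Finset.mem_filter.mp hiS).2
  have hw₀j : w₀ j ≠ 0 := by simpa using (Finset.mem_filter.mp hjS).2
  have hQcard : Fintype.card (QA p d) = p ^ d := by
    rw [Fintype.card_fun, ZMod.card, Fintype.card_fin]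
  -- the key surjectivity statement
  have hmain : ∃ k l : Fin m, k ≠ l ∧
      ∀ x y : QA p d, ∃ w ∈ Wset, w k = x ∧ w l = y := by
    by_cases hq : p ^ d = 2
    · -- the binary case
      set oneQ : QA p d := fun _ => 1 with honeQdef
      have honeQne : oneQ ≠ 0 := by
        intro hc
        have := congrFun hc ⟨0, by omega⟩
        exact one_ne_zero this
      have htwo : ∀ x : QA p d, x = 0 ∨ x = oneQ := by
        intro x
        have hpaircard : ({0, oneQ} : Finset (QA p d)).card = 2 := by
          rw [Finset.card_insert_of_notMem (by simpa using honeQne.symm),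
            Finset.card_singleton]
        have huniv : ({0, oneQ} : Finset (QA p d)) = Finset.univ :=
          Finset.eq_univ_of_card _ (by rw [hpaircard, hQcard, hq])
        have hx := Finset.mem_univ x
        rw [← huniv] at hx
        simpa using hx
      set allOnes : VA p d m := fun _ => oneQ with hallOnesdef
      have hnr' : Wset ≠ ({0, allOnes} : Set (VA p d m)) := by
        rcases hnr with h' | h'
        · exact absurd hq h'
        · exact h'
      have hwstar : ∃ w ∈ Wset, w ≠ 0 ∧ w ≠ allOnes := by
        by_contra hc
        push_neg at hc
        apply hnr'
        apply Set.eq_of_subset_of_subset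
        · intro w hw
          rcases eq_or_ne w 0 with rfl | hne
          · exact Set.mem_insert _ _
          · have := hc w hw hne
            rw [this]
            exact Set.mem_insert_iff.mpr (Or.inr rfl)
        · intro w hw
          rcases hw with rfl | hw
          · exact hW0mem
          · rw [Set.mem_singleton_iff] at hw
            subst hw
            have := hc w₀ hw₀W hw₀ne
            rw [← this]
            exact hw₀W
      obtain ⟨ws, hwsW, hws0, hws1⟩ := hwstar
      obtain ⟨k, hk⟩ : ∃ k, ws k ≠ 0 := by
        by_contra hc
        push_neg at hc
        exact hws0 (funext hc)
      obtain ⟨l, hl⟩ : ∃ l, ws l ≠ oneQ := by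
        by_contra hc
        push_neg at hc
        exact hws1 (funext hc)
      have hwsk : ws k = oneQ := (htwo (ws k)).resolve_left hk
      have hwsl : ws l = 0 := (htwo (ws l)).resolve_right hl
      have hkl : k ≠ l := by
        intro hc
        apply honeQne
        rw [← hwsk, hc, hwsl]
      obtain ⟨u2, hu2W, hu2k, hu2l⟩ :=
        dragW hAff hNT hδ h0 Wset hWinv hw₀W hij hw₀i hw₀j hkl honeQne honeQne
      have hu3W : u2 - ws ∈ Wset := by
        rw [sub_eq_add_neg]
        exact hWadd _ _ hu2W (hWneg _ hwsW)
      refine ⟨k, l, hkl, fun x y => ?_⟩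
      rcases htwo x with rfl | rfl <;> rcases htwo y with rfl | rfl
      · exact ⟨0, hW0mem, rfl, rfl⟩
      · refine ⟨u2 - ws, hu3W, ?_, ?_⟩
        · rw [Pi.sub_apply, hu2k, hwsk, sub_self]
        · rw [Pi.sub_apply, hu2l, hwsl, sub_zero]
      · exact ⟨ws, hwsW, hwsk, hwsl⟩
      · exact ⟨u2, hu2W, hu2k, hu2l⟩
    · -- q > 2
      have h2lt : 2 < p ^ d := by
        have hle : p ≤ p ^ d := Nat.le_self_pow (by omega) p
        have := hp.two_le
        omega
      have hpick : ∀ u : QA p d, ∃ c : QA p d, c ≠ 0 ∧ c ≠ u := by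
        intro u
        by_contra hc
        push_neg at hc
        have hsub : (Finset.univ : Finset (QA p d)) ⊆ {0, u} := by
          intro c _
          rcases eq_or_ne c 0 with rfl | hc0
          · simp
          · simp [hc c hc0]
        have hcard2 : Fintype.card (QA p d) ≤ 2 := by
          calc Fintype.card (QA p d) = (Finset.univ : Finset (QA p d)).card :=
              (Finset.card_univ).symm
            _ ≤ ({0, u} : Finset (QA p d)).card := Finset.card_le_card hsub
            _ ≤ 2 := by
                calc ({0, u} : Finset (QA p d)).card ≤ ({u} : Finset (QA p d)).card + 1 :=
                    Finset.card_insert_le _ _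
                  _ = 2 := by rw [Finset.card_singleton]
        omega
      refine ⟨i, j, hij, fun x y => ?_⟩
      obtain ⟨c, hc0, hcx⟩ := hpick x
      obtain ⟨e, he0, hey⟩ := hpick y
      obtain ⟨w1, hw1W, hw1i, hw1j⟩ :=
        dragW hAff hNT hδ h0 Wset hWinv hw₀W hij hw₀i hw₀j hij hc0 he0
      have hxc : x - c ≠ 0 := sub_ne_zero.mpr (fun hh => hcx hh.symm)
      have hye : y - e ≠ 0 := sub_ne_zero.mpr (fun hh => hey hh.symm)
      obtain ⟨w2, hw2W, hw2i, hw2j⟩ :=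
        dragW hAff hNT hδ h0 Wset hWinv hw₀W hij hw₀i hw₀j hij hxc hye
      refine ⟨w1 + w2, hWadd _ _ hw1W hw2W, ?_, ?_⟩
      · rw [Pi.add_apply, hw1i, hw2i]
        abel
      · rw [Pi.add_apply, hw1j, hw2j]
        abel
  -- counting
  obtain ⟨k, l, hkl, hsurj⟩ := hmain
  set WA : AddSubgroup (VA p d m) :=
    { carrier := Wset
      zero_mem' := hW0mem
      add_mem' := fun {a b} ha hb => hWadd a b ha hb
      neg_mem' := fun {a} ha => hWneg a ha } with hWAdef
  set f : WA →+ (QA p d × QA p d) :=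
    { toFun := fun w => ((w : VA p d m) k, (w : VA p d m) l)
      map_zero' := rfl
      map_add' := fun a b => rfl } with hfdef
  have hfsurj : Function.Surjective f := by
    rintro ⟨x, y⟩
    obtain ⟨w, hwW, hwk, hwl⟩ := hsurj x y
    refine ⟨⟨w, hwW⟩, ?_⟩
    show ((w k : QA p d), (w l : QA p d)) = (x, y)
    rw [hwk, hwl]
  have hdvd := AddSubgroup.card_dvd_of_surjective f hfsurj
  have hQnat : Nat.card (QA p d) = p ^ d := by
    rw [Nat.card_eq_fintype_card, hQcard]
  have hprod : Nat.card (QA p d × QA p d) = (p ^ d) ^ 2 := by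
    rw [Nat.card_prod, hQnat, sq]
  rw [hprod] at hdvd
  have hcards : Nat.card WA = Nat.card Wset := rfl
  rw [hcards] at hdvd
  exact hdvd


end Paper
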